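/- Define F : U → ℝ on a neighborhood U of 0 in ℝ⁴ by F(λ₀, λ_π, μ₀, μ_π) = 2·(L₀ - R₀ - λ_π + μ₀Δ₀)(L₀ - R_π - λ₀ + μ_πΔ_π) / ((R₀ - λ₀ - μ₀Δ₀)(R_π - λ_π - μ_πΔ_π)) - 1, where Δ₀ = (R₀-λ₀)/(R₀-λ₀+μ₀) and Δ_π = (R_π-λ_π)/(R_π-λ_π+μ_π), and L₀, R₀, R_π > 0 are constants with L₀ ≠ R₀, L₀ ≠ R_π, L₀ ≠ R₀+R_π. Then F(0,0,0,0) = 2(L₀-R₀)(L₀-R_π)/(R₀R_π) - 1, and the partial derivatives at the origin are: ∂F/∂λ₀ = 2(L₀-R₀)(L₀-R₀-R_π)/(R₀²R_π), ∂F/∂λ_π = 2(L₀-R_π)(L₀-R₀-R_π)/(R_π²R₀), ∂F/∂μ₀ = 2(L₀-R_π)L₀/(R₀²R_π), ∂F/∂μ_π = 2(L₀-R₀)L₀/(R_π²R₀); in particular all four are nonzero. -/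

import Mathlib

theorem stmt15 (L₀ R₀ Rπ : ℝ) (hL : 0 < L₀) (hR₀ : 0 < R₀) (hRπ : 0 < Rπ)
    (h₁ : L₀ ≠ R₀) (h₂ : L₀ ≠ Rπ) (h₃ : L₀ ≠ R₀ + Rπ)
    (F : ℝ → ℝ → ℝ → ℝ → ℝ)
    (hF : ∀ a₀ aπ μ₀ μπ : ℝ,
      F a₀ aπ μ₀ μπ =
        2 * (L₀ - R₀ - aπ + μ₀ * ((R₀ - a₀) / (R₀ - a₀ + μ₀)))
          * (L₀ - Rπ - a₀ + μπ * ((Rπ - aπ) / (Rπ - aπ + μπ)))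
          / ((R₀ - a₀ - μ₀ * ((R₀ - a₀) / (R₀ - a₀ + μ₀)))
            * (Rπ - aπ - μπ * ((Rπ - aπ) / (Rπ - aπ + μπ)))) - 1) :
    F 0 0 0 0 = 2 * (L₀ - R₀) * (L₀ - Rπ) / (R₀ * Rπ) - 1 ∧
    deriv (fun x => F x 0 0 0) 0 = 2 * (L₀ - R₀) * (L₀ - R₀ - Rπ) / (R₀ ^ 2 * Rπ) ∧
    deriv (fun x => F 0 x 0 0) 0 = 2 * (L₀ - Rπ) * (L₀ - R₀ - Rπ) / (Rπ ^ 2 * R₀) ∧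
    deriv (fun x => F 0 0 x 0) 0 = 2 * (L₀ - Rπ) * L₀ / (R₀ ^ 2 * Rπ) ∧
    deriv (fun x => F 0 0 0 x) 0 = 2 * (L₀ - R₀) * L₀ / (Rπ ^ 2 * R₀) ∧
    deriv (fun x => F x 0 0 0) 0 ≠ 0 ∧
    deriv (fun x => F 0 x 0 0) 0 ≠ 0 ∧
    deriv (fun x => F 0 0 x 0) 0 ≠ 0 ∧
    deriv (fun x => F 0 0 0 x) 0 ≠ 0 := by
  have hR₀' : R₀ ≠ 0 := ne_of_gt hR₀
  have hRπ' : Rπ ≠ 0 := ne_of_gt hRπ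
  have h₃' : L₀ - R₀ - Rπ ≠ 0 := by
    rw [sub_sub]; exact sub_ne_zero.mpr h₃
  -- value at 0
  have hval : F 0 0 0 0 = 2 * (L₀ - R₀) * (L₀ - Rπ) / (R₀ * Rπ) - 1 := by
    rw [hF]; norm_num
  -- derivative in a₀
  have e1 : (fun x => F x 0 0 0) = fun x =>
      2 * (L₀ - R₀) * (L₀ - Rπ - x) / ((R₀ - x) * Rπ) - 1 := by
    funext x; rw [hF]; norm_num
  have d1 : deriv (fun x => F x 0 0 0) 0
      = 2 * (L₀ - R₀) * (L₀ - R₀ - Rπ) / (R₀ ^ 2 * Rπ) := by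
    rw [e1]
    have hn : HasDerivAt (fun x : ℝ => 2 * (L₀ - R₀) * (L₀ - Rπ - x))
        (2 * (L₀ - R₀) * (-1)) 0 :=
      ((hasDerivAt_id 0).const_sub (L₀ - Rπ)).const_mul _
    have hd : HasDerivAt (fun x : ℝ => (R₀ - x) * Rπ) ((-1) * Rπ) 0 :=
      ((hasDerivAt_id 0).const_sub R₀).mul_const _
    have hd0 : (R₀ - 0) * Rπ ≠ 0 := by
      rw [sub_zero]; positivity
    have h := ((hn.div hd hd0).sub_const 1).deriv
    refine h.trans ?_; field_simp; ring
  -- derivative in aπ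
  have e2 : (fun x => F 0 x 0 0) = fun x =>
      2 * (L₀ - R₀ - x) * (L₀ - Rπ) / (R₀ * (Rπ - x)) - 1 := by
    funext x; rw [hF]; norm_num
  have d2 : deriv (fun x => F 0 x 0 0) 0
      = 2 * (L₀ - Rπ) * (L₀ - R₀ - Rπ) / (Rπ ^ 2 * R₀) := by
    rw [e2]
    have hn : HasDerivAt (fun x : ℝ => 2 * (L₀ - R₀ - x) * (L₀ - Rπ))
        (2 * (-1) * (L₀ - Rπ)) 0 := by
      have : HasDerivAt (fun x : ℝ => L₀ - R₀ - x) (-1) 0 :=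
        (hasDerivAt_id 0).const_sub (L₀ - R₀)
      simpa [mul_assoc, mul_comm, mul_left_comm] using (this.const_mul 2).mul_const (L₀ - Rπ)
    have hd : HasDerivAt (fun x : ℝ => R₀ * (Rπ - x)) (R₀ * (-1)) 0 :=
      ((hasDerivAt_id 0).const_sub Rπ).const_mul R₀
    have hd0 : R₀ * (Rπ - 0) ≠ 0 := by
      rw [sub_zero]; positivity
    have h := ((hn.div hd hd0).sub_const 1).deriv
    refine h.trans ?_; field_simp; ring
  -- derivative in μ₀
  have e3 : (fun x => F 0 0 x 0) = fun x =>
      2 * (L₀ - R₀ + x * (R₀ / (R₀ + x))) * (L₀ - Rπ)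
        / ((R₀ - x * (R₀ / (R₀ + x))) * Rπ) - 1 := by
    funext x; rw [hF]; norm_num
  have d3 : deriv (fun x => F 0 0 x 0) 0
      = 2 * (L₀ - Rπ) * L₀ / (R₀ ^ 2 * Rπ) := by
    rw [e3]
    have hq : HasDerivAt (fun x : ℝ => R₀ / (R₀ + x))
        ((0 * (R₀ + 0) - R₀ * (0 + 1)) / (R₀ + 0) ^ 2) 0 :=
      (hasDerivAt_const 0 R₀).div ((hasDerivAt_const 0 R₀).add (hasDerivAt_id 0))
        (by rw [add_zero]; exact hR₀')
    have hu : HasDerivAt (fun x : ℝ => x * (R₀ / (R₀ + x)))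
        (1 * (R₀ / (R₀ + 0)) + 0 * ((0 * (R₀ + 0) - R₀ * (0 + 1)) / (R₀ + 0) ^ 2)) 0 :=
      (hasDerivAt_id 0).mul hq
    set u' := 1 * (R₀ / (R₀ + 0)) + 0 * ((0 * (R₀ + 0) - R₀ * (0 + 1)) / (R₀ + 0) ^ 2) with hu'
    have hu'v : u' = 1 := by rw [hu']; field_simp; ring
    have hn : HasDerivAt (fun x : ℝ => 2 * (L₀ - R₀ + x * (R₀ / (R₀ + x))) * (L₀ - Rπ))
        (2 * u' * (L₀ - Rπ)) 0 := by
      simpa [mul_assoc, mul_comm, mul_left_comm] using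
        ((hu.const_add (L₀ - R₀)).const_mul 2).mul_const (L₀ - Rπ)
    have hd : HasDerivAt (fun x : ℝ => (R₀ - x * (R₀ / (R₀ + x))) * Rπ)
        ((-u') * Rπ) 0 := (hu.const_sub R₀).mul_const Rπ
    have hd0 : (R₀ - 0 * (R₀ / (R₀ + 0))) * Rπ ≠ 0 := by
      rw [zero_mul, sub_zero]; positivity
    have h := ((hn.div hd hd0).sub_const 1).deriv
    refine h.trans ?_; rw [hu'v]; field_simp; ring_nf; field_simp
  -- derivative in μπ
  have e4 : (fun x => F 0 0 0 x) = fun x =>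
      2 * (L₀ - R₀) * (L₀ - Rπ + x * (Rπ / (Rπ + x)))
        / (R₀ * (Rπ - x * (Rπ / (Rπ + x)))) - 1 := by
    funext x; rw [hF]; norm_num
  have d4 : deriv (fun x => F 0 0 0 x) 0
      = 2 * (L₀ - R₀) * L₀ / (Rπ ^ 2 * R₀) := by
    rw [e4]
    have hq : HasDerivAt (fun x : ℝ => Rπ / (Rπ + x))
        ((0 * (Rπ + 0) - Rπ * (0 + 1)) / (Rπ + 0) ^ 2) 0 :=
      (hasDerivAt_const 0 Rπ).div ((hasDerivAt_const 0 Rπ).add (hasDerivAt_id 0))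
        (by rw [add_zero]; exact hRπ')
    have hu : HasDerivAt (fun x : ℝ => x * (Rπ / (Rπ + x)))
        (1 * (Rπ / (Rπ + 0)) + 0 * ((0 * (Rπ + 0) - Rπ * (0 + 1)) / (Rπ + 0) ^ 2)) 0 :=
      (hasDerivAt_id 0).mul hq
    set u' := 1 * (Rπ / (Rπ + 0)) + 0 * ((0 * (Rπ + 0) - Rπ * (0 + 1)) / (Rπ + 0) ^ 2) with hu'
    have hu'v : u' = 1 := by rw [hu']; field_simp; ring
    have hn : HasDerivAt (fun x : ℝ => 2 * (L₀ - R₀) * (L₀ - Rπ + x * (Rπ / (Rπ + x))))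
        (2 * (L₀ - R₀) * u') 0 := (hu.const_add (L₀ - Rπ)).const_mul _
    have hd : HasDerivAt (fun x : ℝ => R₀ * (Rπ - x * (Rπ / (Rπ + x))))
        (R₀ * (-u')) 0 := (hu.const_sub Rπ).const_mul R₀
    have hd0 : R₀ * (Rπ - 0 * (Rπ / (Rπ + 0))) ≠ 0 := by
      rw [zero_mul, sub_zero]; positivity
    have h := ((hn.div hd hd0).sub_const 1).deriv
    refine h.trans ?_; rw [hu'v]; field_simp; ring_nf; field_simp
  refine ⟨hval, d1, d2, d3, d4, ?_, ?_, ?_, ?_⟩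
  · rw [d1]
    exact div_ne_zero (mul_ne_zero (mul_ne_zero two_ne_zero (sub_ne_zero.mpr h₁)) h₃')
      (by positivity)
  · rw [d2]
    exact div_ne_zero (mul_ne_zero (mul_ne_zero two_ne_zero (sub_ne_zero.mpr h₂)) h₃')
      (by positivity)
  · rw [d3]
    exact div_ne_zero (mul_ne_zero (mul_ne_zero two_ne_zero (sub_ne_zero.mpr h₂)) (ne_of_gt hL))
      (by positivity)
  · rw [d4]
    exact div_ne_zero (mul_ne_zero (mul_ne_zero two_ne_zero (sub_ne_zero.mpr h₁)) (ne_of_gt hL))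
      (by positivity)
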